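/- Let d ≥ 3 and let β ∈ ℝ satisfy -1/2 ≤ β and β < -1/d. Then both of the following hold: (a) for every ψ : Fin d × Fin d → ℂ with Σ_{i,j} |ψ (i,j)|² = 1 and Matrix.rank of the matrix X(ψ) i j = ψ (i,j) at most 2, one has 0 ≤ 1 + β · ‖Σ_i ψ (i,i)‖²; and (b) there exists φ : Fin d × Fin d → ℂ with Σ_{i,j} |φ (i,j)|² + β · ‖Σ_i φ (i,i)‖² < 0. (In the paper's terms: for d > 2 every β in [-1/2, -1/d) gives a Werner state that is simultaneously NPT and 1-undistillable.) -/

import Mathlib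

open scoped InnerProductSpace ComplexConjugate
open Matrix

lemma norm_trace_sq_le_two_mul (d : ℕ) (X : Matrix (Fin d) (Fin d) ℂ) (hr : X.rank ≤ 2) :
    ‖∑ i, X i i‖ ^ 2 ≤ 2 * ∑ i, ∑ j, ‖X i j‖ ^ 2 := by
  classical
  set E := EuclideanSpace ℂ (Fin d) with hE
  let c : Fin d → E := fun j => (WithLp.equiv 2 (Fin d → ℂ)).symm (Xᵀ j)
  let V : Submodule ℂ E := Submodule.span ℂ (Set.range c)
  have hfin : Module.finrank ℂ V ≤ 2 := by
    have h1 : X.rank = Module.finrank ℂ (Submodule.span ℂ (Set.range Xᵀ)) :=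
      X.rank_eq_finrank_span_cols
    have h2 : V = (Submodule.span ℂ (Set.range Xᵀ)).map
        ((WithLp.linearEquiv 2 ℂ (Fin d → ℂ)).symm : (Fin d → ℂ) →ₗ[ℂ] E) := by
      rw [Submodule.map_span, ← Set.range_comp (f := fun j => Xᵀ j)]
      rfl
    rw [h2, LinearEquiv.finrank_map_eq, ← h1]
    exact hr
  let b := stdOrthonormalBasis ℂ V
  let u : Fin (Module.finrank ℂ V) → E := fun k => (b k : E)
  have hu : Orthonormal ℂ u := by
    rw [orthonormal_iff_ite]
    intro k l
    have := orthonormal_iff_ite.mp b.orthonormal k l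
    simpa [u, Submodule.coe_inner] using this
  let a : Fin (Module.finrank ℂ V) → Fin d → ℂ := fun k j => ⟪u k, c j⟫_ℂ
  have hcol : ∀ j, c j = ∑ k, a k j • u k := by
    intro j
    have hmem : c j ∈ V := Submodule.subset_span ⟨j, rfl⟩
    have h := congrArg (Subtype.val) (b.sum_repr' ⟨c j, hmem⟩)
    simp only [Submodule.coe_sum, Submodule.coe_smul] at h
    rw [← h]
    refine Finset.sum_congr rfl fun k _ => ?_
    congr 1

  have hXij : ∀ i j, X i j = ∑ k, a k j * u k i := by
    intro i j
    have h := congrArg (EuclideanSpace.proj (𝕜 := ℂ) i) (hcol j)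
    rw [map_sum] at h
    simpa [c, WithLp.equiv_symm_apply, PiLp.toLp_apply, _root_.map_smul, smul_eq_mul,
      Matrix.transpose_apply] using h
  have hnormcol : ∀ j, ∑ i, ‖X i j‖ ^ 2 = ∑ k, ‖a k j‖ ^ 2 := by
    intro j
    have hl : ‖c j‖ ^ 2 = ∑ i, ‖X i j‖ ^ 2 := by
      rw [EuclideanSpace.norm_eq, Real.sq_sqrt (by positivity)]
      simp [c, WithLp.equiv_symm_apply, PiLp.toLp_apply, Matrix.transpose_apply]
    have hrr : (⟪c j, c j⟫_ℂ) = ∑ k, (‖a k j‖ ^ 2 : ℂ) := by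
      conv_lhs => rw [hcol j]
      rw [hu.inner_sum]
      refine Finset.sum_congr rfl fun k _ => ?_
      rw [RCLike.conj_mul]
      norm_cast
    rw [inner_self_eq_norm_sq_to_K] at hrr
    have : ((‖c j‖ ^ 2 : ℝ) : ℂ) = ((∑ k, ‖a k j‖ ^ 2 : ℝ) : ℂ) := by
      push_cast
      exact hrr
    rw [← hl, Complex.ofReal_inj.mp this]
  have htr : ∑ i, X i i = ∑ k, ∑ i, a k i * u k i := by
    simp_rw [hXij]
    rw [Finset.sum_comm]
  have hbound : ∀ k, ‖∑ i, a k i * u k i‖ ≤ Real.sqrt (∑ i, ‖a k i‖ ^ 2) := by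
    intro k
    set av : E := (WithLp.equiv 2 (Fin d → ℂ)).symm (fun i => conj (a k i)) with hav
    have h1 : ⟪av, u k⟫_ℂ = ∑ i, a k i * u k i := by
      rw [PiLp.inner_apply]
      refine Finset.sum_congr rfl fun i _ => ?_
      simp [av, WithLp.equiv_symm_apply, PiLp.toLp_apply, RCLike.inner_apply, mul_comm]
    have h2 : ‖av‖ = Real.sqrt (∑ i, ‖a k i‖ ^ 2) := by
      rw [EuclideanSpace.norm_eq]
      congr 1
      refine Finset.sum_congr rfl fun i _ => ?_
      simp [av, WithLp.equiv_symm_apply, PiLp.toLp_apply]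
    calc ‖∑ i, a k i * u k i‖ = ‖⟪av, u k⟫_ℂ‖ := by rw [h1]
      _ ≤ ‖av‖ * ‖u k‖ := norm_inner_le_norm av (u k)
      _ = Real.sqrt (∑ i, ‖a k i‖ ^ 2) := by rw [hu.1 k, mul_one, h2]
  have htr_le : ‖∑ i, X i i‖ ≤ ∑ k, Real.sqrt (∑ i, ‖a k i‖ ^ 2) := by
    rw [htr]
    exact (norm_sum_le _ _).trans (Finset.sum_le_sum fun k _ => hbound k)
  have hF : ∑ k, ∑ i, ‖a k i‖ ^ 2 = ∑ i, ∑ j, ‖X i j‖ ^ 2 :=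
    calc ∑ k, ∑ j, ‖a k j‖ ^ 2 = ∑ j, ∑ k, ‖a k j‖ ^ 2 := Finset.sum_comm
      _ = ∑ j, ∑ i, ‖X i j‖ ^ 2 := Finset.sum_congr rfl fun j _ => (hnormcol j).symm
      _ = ∑ i, ∑ j, ‖X i j‖ ^ 2 := Finset.sum_comm
  have hFnn : 0 ≤ ∑ i, ∑ j, ‖X i j‖ ^ 2 := by positivity
  have hcs : (∑ k, Real.sqrt (∑ i, ‖a k i‖ ^ 2)) ^ 2 ≤
      ((Module.finrank ℂ V : ℝ)) * ∑ k, ∑ i, ‖a k i‖ ^ 2 := by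
    have h := sq_sum_le_card_mul_sum_sq (s := Finset.univ)
      (f := fun k : Fin (Module.finrank ℂ V) => Real.sqrt (∑ i, ‖a k i‖ ^ 2))
    rw [Finset.card_univ, Fintype.card_fin] at h
    refine h.trans (le_of_eq ?_)
    congr 1
    exact Finset.sum_congr rfl fun k _ => Real.sq_sqrt (by positivity)
  calc ‖∑ i, X i i‖ ^ 2 ≤ (∑ k, Real.sqrt (∑ i, ‖a k i‖ ^ 2)) ^ 2 := by
        exact pow_le_pow_left₀ (norm_nonneg _) htr_le 2
    _ ≤ ((Module.finrank ℂ V : ℝ)) * ∑ k, ∑ i, ‖a k i‖ ^ 2 := hcs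
    _ = ((Module.finrank ℂ V : ℝ)) * ∑ i, ∑ j, ‖X i j‖ ^ 2 := by rw [hF]
    _ ≤ 2 * ∑ i, ∑ j, ‖X i j‖ ^ 2 := by
        apply mul_le_mul_of_nonneg_right _ hFnn
        exact_mod_cast hfin



/-- For `d ≥ 3` and `β ∈ [-1/2, -1/d)`, the Werner state with parameter
`β` is simultaneously 1-undistillable (part (a)) and NPT (part (b)). -/
theorem werner_npt_and_one_undistillable
    (d : ℕ) (hd : 3 ≤ d) (β : ℝ) (hβ₁ : -1 / 2 ≤ β) (hβ₂ : β < -1 / (d : ℝ)) :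
    (∀ ψ : Fin d × Fin d → ℂ,
        (∑ p : Fin d × Fin d, ‖ψ p‖ ^ 2 = 1) →
        Matrix.rank (Matrix.of fun i j : Fin d => ψ (i, j)) ≤ 2 →
        0 ≤ 1 + β * ‖∑ i : Fin d, ψ (i, i)‖ ^ 2) ∧
    (∃ φ : Fin d × Fin d → ℂ,
        (∑ p : Fin d × Fin d, ‖φ p‖ ^ 2) + β * ‖∑ i : Fin d, φ (i, i)‖ ^ 2 < 0) := by
  have hd3 : (3 : ℝ) ≤ (d : ℝ) := by exact_mod_cast hd
  have hdpos : (0 : ℝ) < (d : ℝ) := by linarith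
  have hβneg : β < 0 := lt_trans hβ₂ (div_neg_of_neg_of_pos (by norm_num) hdpos)
  constructor
  · intro ψ hψ hrank
    have key := norm_trace_sq_le_two_mul d (Matrix.of fun i j : Fin d => ψ (i, j)) hrank
    rw [Fintype.sum_prod_type] at hψ
    simp only [Matrix.of_apply] at key
    rw [hψ] at key
    nlinarith [sq_nonneg ‖∑ i : Fin d, ψ (i, i)‖]
  · refine ⟨fun p => if p.1 = p.2 then 1 else 0, ?_⟩
    have h1 : ∑ p : Fin d × Fin d, ‖(if p.1 = p.2 then (1:ℂ) else 0)‖ ^ 2 = (d : ℝ) := by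
      rw [Fintype.sum_prod_type]
      have he : ∀ x y : Fin d, ‖(if x = y then (1:ℂ) else 0)‖ ^ 2 = if x = y then (1:ℝ) else 0 := by
        intro x y; split <;> simp
      simp only [he]
      simp [Finset.sum_ite_eq]
    have h2 : ∑ i : Fin d, (if (i, i).1 = (i, i).2 then (1:ℂ) else 0) = (d : ℂ) := by
      simp
    rw [h1, h2]
    have hnorm : ‖(d : ℂ)‖ = (d : ℝ) := by simp
    rw [hnorm]
    have hmul : β * (d : ℝ) ^ 2 < (-1 / (d : ℝ)) * (d : ℝ) ^ 2 :=
      mul_lt_mul_of_pos_right hβ₂ (by positivity)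
    have : (-1 / (d : ℝ)) * (d : ℝ) ^ 2 = -(d : ℝ) := by field_simp
    nlinarith
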